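/- (Perron–Frobenius property of linear monotone systems) Let A be a real n × n matrix (n ≥ 1) such that the matrix exponential exp(tA) has all entries nonnegative for every t ≥ 0 (i.e., the linear system ẋ = Ax is monotone). Then there exist a real number λ and a vector v ∈ ℝⁿ with v ≥ 0 componentwise and v ≠ 0 such that A v = λ v, and every complex eigenvalue μ of A satisfies Re(μ) ≤ λ. In particular, the eigenvalue of A with maximal real part is real and admits a nonnegative eigenvector. -/

import Mathlib

open Matrix Filter NormedSpace
open scoped ENNReal NNReal

namespace PerronAux

lemma spectrum_iff_eigen {n : ℕ} (M : Matrix (Fin n) (Fin n) ℂ) (μ : ℂ) :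
    μ ∈ spectrum ℂ M ↔ ∃ w, w ≠ 0 ∧ M.mulVec w = μ • w := by
  rw [spectrum.mem_iff]
  rw [Matrix.isUnit_iff_isUnit_det, isUnit_iff_ne_zero, not_not,
    ← Matrix.exists_mulVec_eq_zero_iff]
  have halg : (algebraMap ℂ (Matrix (Fin n) (Fin n) ℂ)) μ = μ • 1 := by
    simp [Algebra.algebraMap_eq_smul_one]
  constructor
  · rintro ⟨v, hv, h⟩
    refine ⟨v, hv, ?_⟩
    rw [halg, Matrix.sub_mulVec, Matrix.smul_mulVec, Matrix.one_mulVec] at h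
    exact (sub_eq_zero.mp h).symm
  · rintro ⟨w, hw, h⟩
    refine ⟨w, hw, ?_⟩
    rw [halg, Matrix.sub_mulVec, Matrix.smul_mulVec, Matrix.one_mulVec, h, sub_self]

lemma metzler_of_exp_nonneg {n : ℕ} (A : Matrix (Fin n) (Fin n) ℝ)
    (hpos : ∀ t ≥ (0 : ℝ), ∀ i j, 0 ≤ NormedSpace.exp (t • A) i j)
    {i j : Fin n} (hij : i ≠ j) : 0 ≤ A i j := by
  letI : SeminormedRing (Matrix (Fin n) (Fin n) ℝ) := Matrix.linftyOpSemiNormedRing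
  letI : NormedRing (Matrix (Fin n) (Fin n) ℝ) := Matrix.linftyOpNormedRing
  letI : NormedAlgebra ℝ (Matrix (Fin n) (Fin n) ℝ) := Matrix.linftyOpNormedAlgebra
  have hd := hasDerivAt_exp_smul_const (𝕂 := ℝ) A 0
  simp only [zero_smul, exp_zero, one_mul] at hd
  let l : Matrix (Fin n) (Fin n) ℝ →ₗ[ℝ] ℝ :=
    { toFun := fun M => M i j, map_add' := fun _ _ => rfl, map_smul' := fun _ _ => rfl }
  let L : Matrix (Fin n) (Fin n) ℝ →L[ℝ] ℝ := LinearMap.toContinuousLinearMap l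
  have hL : ∀ M : Matrix (Fin n) (Fin n) ℝ, L M = M i j := fun _ => rfl
  have hd2 : HasDerivAt (fun t : ℝ => exp (t • A) i j) (A i j) 0 := by
    have := (L.hasFDerivAt.comp_hasDerivAt 0 hd)
    exact this
  have hslope : Tendsto (slope (fun t : ℝ => exp (t • A) i j) 0) (nhdsWithin 0 (Set.Ioi 0))
      (nhds (A i j)) := by
    have := hasDerivAt_iff_tendsto_slope.mp hd2
    exact this.mono_left (nhdsWithin_mono 0 (fun x hx => ne_of_gt hx))
  refine ge_of_tendsto hslope ?_
  filter_upwards [self_mem_nhdsWithin] with t ht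
  have ht' : (0:ℝ) < t := ht
  have h00 : exp ((0:ℝ) • A) i j = 0 := by
    simp [Matrix.one_apply_ne hij]
  rw [slope_def_field]
  apply div_nonneg
  · rw [sub_nonneg, h00]
    exact hpos t ht'.le i j
  · simpa using ht'.le

variable {n : ℕ}

lemma pow_entry_nonneg {B : Matrix (Fin n) (Fin n) ℝ} (hB : ∀ i j, 0 ≤ B i j) :
    ∀ (k : ℕ) (i j : Fin n), 0 ≤ (B ^ k) i j := by
  intro k
  induction k with
  | zero =>
    intro i j
    by_cases h : i = j <;> simp [Matrix.one_apply, h]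
  | succ k ih =>
    intro i j
    rw [pow_succ, Matrix.mul_apply]
    exact Finset.sum_nonneg fun l _ => mul_nonneg (ih i l) (hB l j)

lemma mulVec_nonneg {B : Matrix (Fin n) (Fin n) ℝ} (hB : ∀ i j, 0 ≤ B i j)
    {x : Fin n → ℝ} (hx : 0 ≤ x) : 0 ≤ B *ᵥ x := by
  intro i
  simp only [Matrix.mulVec, dotProduct, Pi.zero_apply]
  exact Finset.sum_nonneg fun j _ => mul_nonneg (hB i j) (hx j)

lemma mulVec_mono {B : Matrix (Fin n) (Fin n) ℝ} (hB : ∀ i j, 0 ≤ B i j)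
    {u v : Fin n → ℝ} (huv : u ≤ v) : B *ᵥ u ≤ B *ᵥ v := by
  intro i
  simp only [Matrix.mulVec, dotProduct]
  exact Finset.sum_le_sum fun j _ => mul_le_mul_of_nonneg_left (huv j) (hB i j)

lemma perron_approx {B : Matrix (Fin n) (Fin n) ℝ} (hB : ∀ i j, 0 ≤ B i j)
    {ρ t : ℝ} (hρ0 : 0 ≤ ρ) (ht : ρ < t)
    (hpow : ∀ s, ρ < s → ∀ᶠ k in atTop, ∀ i j, (B ^ k) i j ≤ s ^ k)
    {x : Fin n → ℝ} (hx0 : 0 ≤ x) (hρx : ρ • x ≤ B *ᵥ x) :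
    ∃ y : Fin n → ℝ, 0 ≤ y ∧ t • y - B *ᵥ y = x ∧ ∀ i, x i ≤ (t - ρ) * y i := by
  have ht0 : 0 < t := lt_of_le_of_lt hρ0 ht
  obtain ⟨s, hρs, hst⟩ : ∃ s, ρ < s ∧ s < t := ⟨(ρ + t) / 2, by linarith, by linarith⟩
  have hs0 : 0 ≤ s := le_trans hρ0 hρs.le
  set X : ℝ := ∑ j, x j with hX
  have hX0 : 0 ≤ X := Finset.sum_nonneg fun j _ => hx0 j
  have hmv0 : ∀ (k : ℕ), 0 ≤ B ^ k *ᵥ x := fun k => mulVec_nonneg (pow_entry_nonneg hB k) hx0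
  have hbd : ∀ᶠ k in atTop, ∀ i, (B ^ k *ᵥ x) i ≤ s ^ k * X := by
    filter_upwards [hpow s hρs] with k hk i
    calc (B ^ k *ᵥ x) i = ∑ j, (B ^ k) i j * x j := by
          simp [Matrix.mulVec, dotProduct]
    _ ≤ ∑ j, s ^ k * x j :=
          Finset.sum_le_sum fun j _ => mul_le_mul_of_nonneg_right (hk i j) (hx0 j)
    _ = s ^ k * X := by rw [Finset.mul_sum]
  have hnorm_bd : ∀ᶠ k in atTop, ‖B ^ k *ᵥ x‖ ≤ s ^ k * X := by
    filter_upwards [hbd] with k hk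
    refine (pi_norm_le_iff_of_nonneg (by positivity)).mpr fun i => ?_
    rw [Real.norm_eq_abs, abs_of_nonneg (hmv0 k i)]
    exact hk i
  -- the series
  set g : ℕ → (Fin n → ℝ) := fun k => (t⁻¹) ^ (k + 1) • (B ^ k *ᵥ x) with hg
  have hgbound : ∀ᶠ k in atTop, ‖g k‖ ≤ (X / t) * (s / t) ^ k := by
    filter_upwards [hnorm_bd] with k hk
    rw [hg]
    simp only [norm_smul, Real.norm_eq_abs, abs_pow, abs_inv, abs_of_pos ht0]
    calc t⁻¹ ^ (k+1) * ‖B ^ k *ᵥ x‖ ≤ t⁻¹ ^ (k+1) * (s ^ k * X) := by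
          exact mul_le_mul_of_nonneg_left hk (by positivity)
    _ = (X / t) * (s / t) ^ k := by
          rw [pow_succ, div_pow]
          ring
  have hgsum : Summable g := by
    refine Summable.of_norm_bounded_eventually_nat ?_ hgbound
    exact (summable_geometric_of_lt_one (by positivity) (by
      rw [div_lt_one ht0]; exact hst)).mul_left _
  set y : Fin n → ℝ := ∑' k, g k with hy
  have hysum : HasSum g y := hgsum.hasSum
  have hyc : ∀ i, HasSum (fun k => g k i) (y i) := fun i => Pi.hasSum.mp hysum i
  have hg0 : ∀ k, 0 ≤ g k := by
    intro k i
    exact mul_nonneg (by positivity) (hmv0 k i)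
  have hy0 : 0 ≤ y := fun i => hasSum_le (fun k => hg0 k i) hasSum_zero (hyc i)
  -- B *ᵥ y
  let Lmv : (Fin n → ℝ) →L[ℝ] (Fin n → ℝ) := LinearMap.toContinuousLinearMap B.mulVecLin
  have hLmv : ∀ v, Lmv v = B *ᵥ v := fun v => rfl
  have hBy : HasSum (fun k => B *ᵥ g k) (B *ᵥ y) := by
    have := Lmv.hasSum hysum
    simpa [hLmv] using this
  have hBg : ∀ k, B *ᵥ g k = (t⁻¹) ^ (k + 1) • (B ^ (k + 1) *ᵥ x) := by
    intro k
    rw [hg]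
    simp only
    rw [Matrix.mulVec_smul, Matrix.mulVec_mulVec, ← pow_succ']
  -- lower bound B *ᵥ y ≥ ρ • y
  have hind : ∀ k : ℕ, ρ • (B ^ k *ᵥ x) ≤ B ^ (k + 1) *ᵥ x := by
    intro k
    induction k with
    | zero => simpa using hρx
    | succ k ih =>
      have h2 := mulVec_mono hB ih
      rw [Matrix.mulVec_smul, Matrix.mulVec_mulVec, Matrix.mulVec_mulVec,
        ← pow_succ', ← pow_succ'] at h2
      exact h2
  have hρy : ∀ i, ρ * y i ≤ (B *ᵥ y) i := by
    intro i
    have h1 : HasSum (fun k => ρ * g k i) (ρ * y i) := (hyc i).mul_left ρ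
    have h2 : HasSum (fun k => (B *ᵥ g k) i) ((B *ᵥ y) i) := Pi.hasSum.mp hBy i
    refine hasSum_le (fun k => ?_) h1 h2
    rw [hBg k]
    have := hind k i
    simp only [Pi.smul_apply, smul_eq_mul] at this ⊢
    calc ρ * ((t⁻¹) ^ (k+1) * (B ^ k *ᵥ x) i) = (t⁻¹) ^ (k+1) * (ρ * (B ^ k *ᵥ x) i) := by ring
    _ ≤ (t⁻¹) ^ (k+1) * (B ^ (k+1) *ᵥ x) i :=
        mul_le_mul_of_nonneg_left this (by positivity)
  -- telescoping identity
  set u : ℕ → (Fin n → ℝ) := fun k => (t⁻¹) ^ k • (B ^ k *ᵥ x) with hu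
  have hterm : ∀ k, t • g k - B *ᵥ g k = u k - u (k + 1) := by
    intro k
    rw [hBg k, hu, hg]
    simp only
    rw [smul_smul]
    congr 1
    congr 1
    rw [pow_succ]
    field_simp
  have hu0 : Tendsto u atTop (nhds 0) := by
    refine squeeze_zero_norm' (a := fun k => (s / t) ^ k * X) ?_ ?_
    · filter_upwards [hnorm_bd] with k hk
      rw [hu]
      simp only [norm_smul, Real.norm_eq_abs, abs_pow, abs_inv, abs_of_pos ht0]
      calc t⁻¹ ^ k * ‖B ^ k *ᵥ x‖ ≤ t⁻¹ ^ k * (s ^ k * X) :=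
            mul_le_mul_of_nonneg_left hk (by positivity)
      _ = (s / t) ^ k * X := by rw [div_pow]; ring
    · have : Tendsto (fun k : ℕ => (s / t) ^ k) atTop (nhds 0) :=
        tendsto_pow_atTop_nhds_zero_of_lt_one (by positivity) (by rw [div_lt_one ht0]; exact hst)
      simpa using this.mul_const X
  have hty : t • y - B *ᵥ y = x := by
    have hS : HasSum (fun k => t • g k - B *ᵥ g k) (t • y - B *ᵥ y) :=
      (hysum.const_smul t).sub hBy
    have h1 : Tendsto (fun N => ∑ k ∈ Finset.range N, (t • g k - B *ᵥ g k)) atTop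
        (nhds (t • y - B *ᵥ y)) := hS.tendsto_sum_nat
    have h2 : (fun N => ∑ k ∈ Finset.range N, (t • g k - B *ᵥ g k)) =
        fun N => u 0 - u N := by
      funext N
      rw [Finset.sum_congr rfl fun k _ => hterm k]
      exact Finset.sum_range_sub' u N
    rw [h2] at h1
    have h3 : Tendsto (fun N => u 0 - u N) atTop (nhds (u 0 - 0)) :=
      tendsto_const_nhds.sub hu0
    have h4 := tendsto_nhds_unique h1 h3
    rw [h4, sub_zero, hu]
    simp
  refine ⟨y, hy0, hty, fun i => ?_⟩
  have hxi : x i = t * y i - (B *ᵥ y) i := by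
    have := congr_fun hty i
    simpa using this.symm
  rw [hxi]
  have := hρy i
  nlinarith [hρy i]

lemma perron (hn : 0 < n) (B : Matrix (Fin n) (Fin n) ℝ) (hB : ∀ i j, 0 ≤ B i j) :
    ∃ (r : ℝ) (v : Fin n → ℝ), 0 ≤ v ∧ v ≠ 0 ∧ B *ᵥ v = r • v ∧
      ∀ (μ : ℂ) (w : Fin n → ℂ), w ≠ 0 →
        (B.map (fun a : ℝ => (a : ℂ))).mulVec w = μ • w → ‖μ‖ ≤ r := by
  letI : SeminormedRing (Matrix (Fin n) (Fin n) ℂ) := Matrix.linftyOpSemiNormedRing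
  letI : NormedRing (Matrix (Fin n) (Fin n) ℂ) := Matrix.linftyOpNormedRing
  letI : NormedAlgebra ℂ (Matrix (Fin n) (Fin n) ℂ) := Matrix.linftyOpNormedAlgebra
  haveI : Nonempty (Fin n) := ⟨⟨0, hn⟩⟩
  haveI : Nontrivial (Matrix (Fin n) (Fin n) ℂ) :=
    ⟨0, 1, fun h => zero_ne_one
      ((congr_fun (congr_fun h ⟨0, hn⟩) ⟨0, hn⟩).trans (Matrix.one_apply_eq _))⟩
  set Bc : Matrix (Fin n) (Fin n) ℂ := B.map (fun a : ℝ => (a : ℂ)) with hBcdef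
  obtain ⟨μ0, hμ0spec, hμ0rad⟩ := spectrum.exists_nnnorm_eq_spectralRadius (a := Bc)
  set ρ : ℝ := ‖μ0‖ with hρ
  have hρ0 : 0 ≤ ρ := norm_nonneg _
  have hmap : ∀ k : ℕ, Bc ^ k = (B ^ k).map (fun a : ℝ => (a : ℂ)) := by
    intro k
    induction k with
    | zero =>
      simp only [pow_zero]
      ext i j
      by_cases h : i = j <;> simp [Matrix.one_apply, h]
    | succ k ih =>
      rw [pow_succ, pow_succ, ih]
      ext i j
      simp [hBcdef, Matrix.mul_apply, Matrix.map_apply]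
  have hentry : ∀ (M : Matrix (Fin n) (Fin n) ℂ) (i j : Fin n), ‖M i j‖ ≤ ‖M‖ := by
    intro M i j
    have h1 : ‖M i j‖₊ ≤ ∑ j' : Fin n, ‖M i j'‖₊ :=
      Finset.single_le_sum (f := fun j' => ‖M i j'‖₊) (fun _ _ => zero_le) (Finset.mem_univ j)
    have h2 : (∑ j' : Fin n, ‖M i j'‖₊) ≤ ‖M‖₊ := by
      rw [Matrix.linfty_opNNNorm_def]
      exact Finset.le_sup (f := fun i => ∑ j : Fin n, ‖M i j‖₊) (Finset.mem_univ i)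
    have h3 := h1.trans h2
    have h4 := NNReal.coe_le_coe.mpr h3
    simpa [coe_nnnorm] using h4
  have hpow : ∀ s, ρ < s → ∀ᶠ k in atTop, ∀ i j, (B ^ k) i j ≤ s ^ k := by
    intro s hs
    have hs0 : 0 < s := lt_of_le_of_lt hρ0 hs
    have hgel := spectrum.pow_norm_pow_one_div_tendsto_nhds_spectralRadius (a := Bc)
    rw [← hμ0rad, ← ENNReal.ofReal_coe_nnreal, coe_nnnorm] at hgel
    have hev := hgel.eventually_lt_const ((ENNReal.ofReal_lt_ofReal_iff hs0).mpr hs)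
    filter_upwards [hev, Filter.eventually_ge_atTop 1] with k hk hk1 i j
    have hkne : (k : ℝ) ≠ 0 := Nat.cast_ne_zero.mpr (by omega)
    have hr : ‖Bc ^ k‖ ^ ((1:ℝ)/k) < s := by
      rwa [ENNReal.ofReal_lt_ofReal_iff hs0] at hk
    have hnn : (0:ℝ) ≤ ‖Bc ^ k‖ ^ ((1:ℝ)/k) := Real.rpow_nonneg (norm_nonneg _) _
    have hBk : ‖Bc ^ k‖ ≤ s ^ k := by
      have h1 : (‖Bc ^ k‖ ^ ((1:ℝ)/k)) ^ (k:ℕ) ≤ s ^ k := pow_le_pow_left₀ hnn hr.le k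
      rwa [← Real.rpow_natCast (‖Bc ^ k‖ ^ ((1:ℝ)/k)) k, ← Real.rpow_mul (norm_nonneg _),
        one_div, inv_mul_cancel₀ hkne, Real.rpow_one] at h1
    calc (B ^ k) i j ≤ |(B ^ k) i j| := le_abs_self _
    _ = ‖(Bc ^ k) i j‖ := by
        rw [hmap k]
        simp [Matrix.map_apply]
    _ ≤ ‖Bc ^ k‖ := hentry _ i j
    _ ≤ s ^ k := hBk
  obtain ⟨w, hw0, hweq⟩ := (spectrum_iff_eigen Bc μ0).mp hμ0spec
  set x : Fin n → ℝ := fun i => ‖w i‖ with hx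
  have hx0 : (0 : Fin n → ℝ) ≤ x := fun i => norm_nonneg _
  have hxne : x ≠ 0 := by
    intro h
    apply hw0
    funext i
    have := congr_fun h i
    simpa [hx, norm_eq_zero] using this
  have hρx : ρ • x ≤ B *ᵥ x := by
    intro i
    have h1 : (Bc *ᵥ w) i = μ0 * w i := by rw [hweq]; rfl
    calc (ρ • x) i = ‖μ0 * w i‖ := by simp [hx, hρ, norm_mul]
    _ = ‖(Bc *ᵥ w) i‖ := by rw [h1]
    _ = ‖∑ j, Bc i j * w j‖ := rfl
    _ ≤ ∑ j, ‖Bc i j * w j‖ := norm_sum_le _ _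
    _ = ∑ j, B i j * x j := by
        refine Finset.sum_congr rfl fun j _ => ?_
        rw [norm_mul, hBcdef]
        simp [Matrix.map_apply, Complex.norm_real, Real.norm_eq_abs, hx,
          abs_of_nonneg (hB i j)]
    _ = (B *ᵥ x) i := by simp [Matrix.mulVec, dotProduct]
  obtain ⟨i0, hi0⟩ : ∃ i, x i ≠ 0 := Function.ne_iff.mp hxne
  have hxi0 : 0 < x i0 := lt_of_le_of_ne (hx0 i0) (Ne.symm hi0)
  have happrox : ∀ m : ℕ, ∃ y : Fin n → ℝ, 0 ≤ y ∧
      (ρ + 1/(m+1)) • y - B *ᵥ y = x ∧ ∀ i, x i ≤ (1/(m+1)) * y i := by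
    intro m
    have hm : (0:ℝ) < 1/((m:ℝ)+1) := by positivity
    have hlt : ρ < ρ + 1/((m:ℝ)+1) := by linarith
    obtain ⟨y, h1, h2, h3⟩ := perron_approx hB hρ0 hlt hpow hx0 hρx
    refine ⟨y, h1, h2, fun i => ?_⟩
    have := h3 i
    simpa using this
  choose y hy0 hyeq hylb using happrox
  set N : ℕ → ℝ := fun m => ‖y m‖ with hN
  have hNlb : ∀ m : ℕ, ((m:ℝ)+1) * x i0 ≤ N m := by
    intro m
    have h := hylb m i0
    have hm : (0:ℝ) < (m:ℝ)+1 := by positivity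
    have h2 : ((m:ℝ)+1) * x i0 ≤ y m i0 := by
      rw [one_div] at h
      have h5 := mul_le_mul_of_nonneg_left h hm.le
      rwa [← mul_assoc, mul_inv_cancel₀ (ne_of_gt hm), one_mul] at h5
    refine h2.trans ?_
    calc y m i0 ≤ |y m i0| := le_abs_self _
    _ ≤ ‖y m‖ := by
        rw [← Real.norm_eq_abs]
        exact norm_le_pi_norm (y m) i0
  have hN0 : ∀ m : ℕ, 0 < N m := by
    intro m
    refine lt_of_lt_of_le ?_ (hNlb m)
    positivity
  set v : ℕ → (Fin n → ℝ) := fun m => (N m)⁻¹ • y m with hv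
  have hvmem : ∀ m : ℕ, v m ∈ Metric.sphere (0 : Fin n → ℝ) 1 := by
    intro m
    rw [mem_sphere_zero_iff_norm, hv]
    simp only [norm_smul, Real.norm_eq_abs, abs_of_pos (inv_pos.mpr (hN0 m))]
    exact inv_mul_cancel₀ (ne_of_gt (hN0 m))
  obtain ⟨vlim, hvlimmem, φ, hφ, hφtend⟩ :=
    (isCompact_sphere (0 : Fin n → ℝ) 1).tendsto_subseq hvmem
  have hveq : ∀ m : ℕ, (ρ + 1/((m:ℝ)+1)) • v m - B *ᵥ v m = (N m)⁻¹ • x := by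
    intro m
    rw [hv]
    simp only
    rw [smul_comm, Matrix.mulVec_smul, ← smul_sub, hyeq m]
  have hBvtend : Tendsto (fun m => B *ᵥ v (φ m)) atTop (nhds (B *ᵥ vlim)) := by
    have hc : Continuous fun z : Fin n → ℝ => B *ᵥ z :=
      (LinearMap.toContinuousLinearMap B.mulVecLin).continuous
    exact (hc.tendsto vlim).comp hφtend
  have httend : Tendsto (fun m => (ρ + 1/(((φ m : ℕ):ℝ)+1))) atTop (nhds ρ) := by
    have h1 : Tendsto (fun m : ℕ => 1/((m:ℝ)+1)) atTop (nhds 0) :=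
      tendsto_one_div_add_atTop_nhds_zero_nat
    have h2 := h1.comp hφ.tendsto_atTop
    have h3 := (tendsto_const_nhds (x := ρ) (f := atTop)).add h2
    simpa using h3
  have hlhs : Tendsto (fun m => (ρ + 1/(((φ m : ℕ):ℝ)+1)) • v (φ m) - B *ᵥ v (φ m)) atTop
      (nhds (ρ • vlim - B *ᵥ vlim)) := (httend.smul hφtend).sub hBvtend
  have hrhs : Tendsto (fun m => (N (φ m))⁻¹ • x) atTop (nhds 0) := by
    refine squeeze_zero_norm' (a := fun m : ℕ => ‖x‖ / (((m:ℝ)+1) * x i0)) ?_ ?_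
    · refine Filter.Eventually.of_forall fun m => ?_
      rw [norm_smul, Real.norm_eq_abs, abs_of_pos (inv_pos.mpr (hN0 (φ m)))]
      have hφm : (m:ℝ)+1 ≤ ((φ m : ℕ):ℝ)+1 := by
        have := hφ.le_apply (x := m)
        exact_mod_cast Nat.succ_le_succ this
      have hle : ((m:ℝ)+1) * x i0 ≤ N (φ m) :=
        le_trans (by nlinarith [hxi0]) (hNlb (φ m))
      calc (N (φ m))⁻¹ * ‖x‖ ≤ (((m:ℝ)+1) * x i0)⁻¹ * ‖x‖ := by
            refine mul_le_mul_of_nonneg_right ?_ (norm_nonneg x)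
            exact inv_anti₀ (by positivity) hle
      _ = ‖x‖ / (((m:ℝ)+1) * x i0) := by ring
    · have h1 : Tendsto (fun m : ℕ => 1/((m:ℝ)+1)) atTop (nhds 0) :=
        tendsto_one_div_add_atTop_nhds_zero_nat
      have h2 := h1.mul_const (‖x‖ / x i0)
      rw [zero_mul] at h2
      refine h2.congr fun m => ?_
      field_simp
  have hkey : ρ • vlim - B *ᵥ vlim = 0 := by
    have heqfun : (fun m => (ρ + 1/(((φ m : ℕ):ℝ)+1)) • v (φ m) - B *ᵥ v (φ m)) =
        fun m => (N (φ m))⁻¹ • x := funext fun m => hveq (φ m)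
    rw [heqfun] at hlhs
    exact tendsto_nhds_unique hlhs hrhs
  have hBv : B *ᵥ vlim = ρ • vlim := (sub_eq_zero.mp hkey).symm
  have hvlim0 : (0 : Fin n → ℝ) ≤ vlim := by
    intro i
    have hev : Tendsto (fun m => v (φ m) i) atTop (nhds (vlim i)) :=
      ((continuous_apply i).tendsto _).comp hφtend
    refine ge_of_tendsto' hev fun m => ?_
    exact mul_nonneg (le_of_lt (inv_pos.mpr (hN0 (φ m)))) (hy0 (φ m) i)
  have hvlimne : vlim ≠ 0 := by
    intro h
    rw [mem_sphere_zero_iff_norm, h, norm_zero] at hvlimmem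
    exact zero_ne_one hvlimmem
  refine ⟨ρ, vlim, hvlim0, hvlimne, hBv, ?_⟩
  intro μ w' hw' heq
  have hμspec : μ ∈ spectrum ℂ Bc := (spectrum_iff_eigen Bc μ).mpr ⟨w', hw', heq⟩
  have h1 : (‖μ‖₊ : ℝ≥0∞) ≤ ⨆ k ∈ spectrum ℂ Bc, (‖k‖₊ : ℝ≥0∞) :=
    le_iSup₂ (f := fun k (_ : k ∈ spectrum ℂ Bc) => (‖k‖₊ : ℝ≥0∞)) μ hμspec
  have h2 : (‖μ‖₊ : ℝ≥0∞) ≤ (‖μ0‖₊ : ℝ≥0∞) := by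
    rw [hμ0rad]
    exact h1
  have h3 := ENNReal.coe_le_coe.mp h2
  have h4 := NNReal.coe_le_coe.mpr h3
  simpa [coe_nnnorm] using h4

end PerronAux

/-- Perron–Frobenius property of linear monotone systems: Let `A` be a real
`n × n` matrix (`n ≥ 1`) such that `exp (t • A)` is entrywise nonnegative for every `t ≥ 0`.
Then there exist `λ ∈ ℝ` and a vector `v ⪰ 0`, `v ≠ 0`, with `A v = λ v`, and every complex
eigenvalue `μ` of `A` satisfies `Re μ ≤ λ`. -/
theorem perron_frobenius_of_monotone_linear_system {n : ℕ} (hn : 0 < n)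
    (A : Matrix (Fin n) (Fin n) ℝ)
    (hpos : ∀ t ≥ (0 : ℝ), ∀ i j, 0 ≤ NormedSpace.exp (t • A) i j) :
    ∃ (lam : ℝ) (v : Fin n → ℝ), 0 ≤ v ∧ v ≠ 0 ∧ A.mulVec v = lam • v ∧
      ∀ (μ : ℂ) (w : Fin n → ℂ), w ≠ 0 →
        (A.map (fun a : ℝ => (a : ℂ))).mulVec w = μ • w → μ.re ≤ lam := by
  classical
  have hmetz : ∀ i j, i ≠ j → 0 ≤ A i j := fun i j h =>
    PerronAux.metzler_of_exp_nonneg A hpos h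
  set c : ℝ := ∑ i, |A i i| with hc
  have hcA : ∀ i, |A i i| ≤ c := fun i =>
    Finset.single_le_sum (f := fun i => |A i i|) (fun _ _ => abs_nonneg _) (Finset.mem_univ i)
  set B : Matrix (Fin n) (Fin n) ℝ := A + c • 1 with hB
  have hBnn : ∀ i j, 0 ≤ B i j := by
    intro i j
    rw [hB]
    by_cases h : i = j
    · subst h
      simp only [Matrix.add_apply, Matrix.smul_apply, Matrix.one_apply_eq, smul_eq_mul, mul_one]
      nlinarith [hcA i, neg_abs_le (A i i)]
    · simp only [Matrix.add_apply, Matrix.smul_apply, Matrix.one_apply_ne h, smul_eq_mul,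
        mul_zero, add_zero]
      exact hmetz i j h
  obtain ⟨r, v, hv0, hvne, hvB, hbound⟩ := PerronAux.perron hn B hBnn
  refine ⟨r - c, v, hv0, hvne, ?_, ?_⟩
  · have h1 : B *ᵥ v = A *ᵥ v + c • v := by
      rw [hB, Matrix.add_mulVec, Matrix.smul_mulVec, Matrix.one_mulVec]
    rw [h1] at hvB
    have h2 : A *ᵥ v = r • v - c • v := eq_sub_of_add_eq hvB
    rw [h2, sub_smul]
  · intro μ w hw heq
    have hBc : (B.map (fun a : ℝ => (a:ℂ))) *ᵥ w = (μ + c) • w := by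
      have hmap1 : B.map (fun a : ℝ => (a:ℂ)) =
          A.map (fun a : ℝ => (a:ℂ)) + (c:ℂ) • 1 := by
        ext i j
        rw [hB]
        by_cases h : i = j
        · subst h
          simp only [Matrix.map_apply, Matrix.add_apply, Matrix.smul_apply, Matrix.one_apply_eq,
            smul_eq_mul, mul_one]
          push_cast
          ring
        · simp only [Matrix.map_apply, Matrix.add_apply, Matrix.smul_apply,
            Matrix.one_apply_ne h, smul_eq_mul, mul_zero, add_zero]
      rw [hmap1, Matrix.add_mulVec, Matrix.smul_mulVec, Matrix.one_mulVec, heq,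
        ← add_smul]
    have hb := hbound (μ + (c:ℂ)) w hw hBc
    have hre : μ.re + c ≤ ‖μ + (c:ℂ)‖ := by
      have h5 := Complex.re_le_norm (μ + (c:ℂ))
      simpa [Complex.add_re, Complex.ofReal_re] using h5
    linarith
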